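/- For every natural number n ≥ 2, every λ ∈ [−1,1] and every x ∈ [0,1], the second central moment of the λ-Bernstein operator satisfies α_n(x) := B_{n,λ}((t − x)²; x) = x(1−x)/n + λ[ (2x − 4x² + 2x^{n+1})/(n(n−1)) + (x^{n+1} + (1−x)^{n+1} − 1)/(n²(n−1)) − 2x(1 − 2x + x^{n+1} − (1−x)^{n+1})/(n(n−1)) ]. -/

import Mathlib

open Finset Filter

/-- Bernstein basis polynomial `b_{n,i}(x) = C(n,i) x^i (1-x)^(n-i)`. -/
noncomputable def bern (n i : ℕ) (x : ℝ) : ℝ :=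
  (n.choose i : ℝ) * x ^ i * (1 - x) ^ (n - i)

/-- Bézier basis `b̃_{n,i}(λ; x)` with shape parameter `lam`. -/
noncomputable def bez (n : ℕ) (lam x : ℝ) (i : ℕ) : ℝ :=
  if i = 0 then bern n 0 x - lam / ((n : ℝ) + 1) * bern (n + 1) 1 x
  else if i = n then bern n n x - lam / ((n : ℝ) + 1) * bern (n + 1) n x
  else bern n i x + lam * (((n : ℝ) - 2 * (i : ℝ) + 1) / ((n : ℝ) ^ 2 - 1) * bern (n + 1) i x
    - ((n : ℝ) - 2 * (i : ℝ) - 1) / ((n : ℝ) ^ 2 - 1) * bern (n + 1) (i + 1) x)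

/-- The λ-Bernstein operator `B_{n,λ}(f; x) = ∑_{i=0}^n f(i/n) b̃_{n,i}(λ; x)`. -/
noncomputable def lB (n : ℕ) (lam : ℝ) (f : ℝ → ℝ) (x : ℝ) : ℝ :=
  ∑ i ∈ Finset.range (n + 1), f ((i : ℝ) / (n : ℝ)) * bez n lam x i

lemma bern_eval (m j : ℕ) (x : ℝ) :
    bern m j x = Polynomial.eval x (bernsteinPolynomial ℝ m j) := by
  simp [bern, bernsteinPolynomial]

lemma sum_bern (m : ℕ) (x : ℝ) : ∑ j ∈ Finset.range (m+1), bern m j x = 1 := by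
  have h := congrArg (Polynomial.eval x) (bernsteinPolynomial.sum ℝ m)
  simpa [Polynomial.eval_finset_sum, bern_eval] using h

lemma sum_j_bern (m : ℕ) (x : ℝ) :
    ∑ j ∈ Finset.range (m+1), (j:ℝ) * bern m j x = (m:ℝ) * x := by
  have h := congrArg (Polynomial.eval x) (bernsteinPolynomial.sum_smul ℝ m)
  simpa [Polynomial.eval_finset_sum, bern_eval] using h

lemma sum_jj_bern (m : ℕ) (hm : 1 ≤ m) (x : ℝ) :
    ∑ j ∈ Finset.range (m+1), (j:ℝ) * ((j:ℝ) - 1) * bern m j x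
      = (m:ℝ) * ((m:ℝ) - 1) * x^2 := by
  have h := congrArg (Polynomial.eval x) (bernsteinPolynomial.sum_mul_smul ℝ m)
  simp only [Polynomial.eval_finset_sum, Polynomial.eval_smul, Polynomial.eval_pow,
    Polynomial.eval_X, smul_eq_mul, nsmul_eq_mul] at h
  have h2 : ∑ j ∈ Finset.range (m+1), ((j * (j-1) : ℕ) : ℝ) * bern m j x
      = ((m * (m-1) : ℕ) : ℝ) * x^2 := by
    simpa [bern_eval] using h
  rw [show ((m * (m-1) : ℕ) : ℝ) = (m:ℝ) * ((m:ℝ) - 1) by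
    push_cast [Nat.cast_sub hm]; ring] at h2
  rw [← h2]
  refine Finset.sum_congr rfl fun j _ => ?_
  rcases Nat.eq_zero_or_pos j with rfl | hj
  · simp
  · push_cast [Nat.cast_sub hj]; ring

noncomputable def ufun (n : ℕ) (x : ℝ) (j : ℕ) : ℝ :=
  ((n:ℝ) - 2*(j:ℝ) + 1) / ((n:ℝ)^2 - 1) * bern (n+1) j x

lemma step1 (n : ℕ) (hn : 2 ≤ n) (lam x : ℝ) (g : ℕ → ℝ) :
    ∑ i ∈ Finset.range (n+1), g i * bez n lam x i
      = (∑ i ∈ Finset.range (n+1), g i * bern n i x)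
        + lam * ∑ j ∈ Finset.range n, (g (j+1) - g j) * ufun n x (j+1) := by
  have hN : (2:ℝ) ≤ (n:ℝ) := by exact_mod_cast hn
  have h1 : ((n:ℝ)+1) ≠ 0 := by nlinarith
  have h2 : ((n:ℝ)^2-1) ≠ 0 := by nlinarith
  have key : ∀ i ∈ Finset.range (n+1), g i * bez n lam x i
      = (g i * bern n i x + lam * (g i * ufun n x i - g i * ufun n x (i+1)))
        + ((if i = 0 then -(lam * (g 0 * ufun n x 0)) else 0)
          + (if i = n then lam * (g n * ufun n x (n+1)) else 0)) := by
    intro i hi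
    rcases eq_or_ne i 0 with rfl | hi0
    · have hn0 : (0:ℕ) ≠ n := by omega
      simp only [bez, if_pos rfl, if_neg hn0, ufun, if_neg (by omega : ¬ (0:ℕ) = n)]
      push_cast
      field_simp
      ring
    · rcases eq_or_ne i n with rfl | hin
      · simp only [bez, if_neg hi0, if_pos rfl, ufun, if_neg hi0]
        push_cast
        field_simp
        ring
      · simp only [bez, if_neg hi0, if_neg hin, ufun, if_neg hi0, if_neg hin]
        push_cast
        ring
  rw [Finset.sum_congr rfl key]
  rw [Finset.sum_add_distrib, Finset.sum_add_distrib, Finset.sum_add_distrib]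
  rw [Finset.sum_ite_eq' (Finset.range (n+1)) 0 (fun _ => -(lam * (g 0 * ufun n x 0)))]
  rw [Finset.sum_ite_eq' (Finset.range (n+1)) n (fun _ => lam * (g n * ufun n x (n+1)))]
  rw [if_pos (by simp : (0:ℕ) ∈ Finset.range (n+1)), if_pos (by simp [Nat.lt_succ_self])]
  rw [← Finset.mul_sum]
  have tel : ∑ i ∈ Finset.range (n+1), (g i * ufun n x i - g i * ufun n x (i+1))
      = (∑ j ∈ Finset.range n, (g (j+1) - g j) * ufun n x (j+1))
        + g 0 * ufun n x 0 - g n * ufun n x (n+1) := by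
    rw [Finset.sum_sub_distrib]
    rw [Finset.sum_range_succ' (fun i => g i * ufun n x i)]
    rw [Finset.sum_range_succ (fun i => g i * ufun n x (i+1))]
    have : ∑ j ∈ Finset.range n, (g (j+1) - g j) * ufun n x (j+1)
        = (∑ j ∈ Finset.range n, g (j+1) * ufun n x (j+1))
          - ∑ j ∈ Finset.range n, g j * ufun n x (j+1) := by
      rw [← Finset.sum_sub_distrib]; exact Finset.sum_congr rfl fun j _ => by ring
    rw [this]; ring
  rw [tel]; ring

/-- second central moment `α_n(x) = B_{n,λ}((t - x)²; x)`. -/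
theorem lB_second_central_moment (n : ℕ) (hn : 2 ≤ n) (lam : ℝ)
    (hlam : lam ∈ Set.Icc (-1 : ℝ) 1) (x : ℝ) (hx : x ∈ Set.Icc (0 : ℝ) 1) :
    lB n lam (fun t => (t - x) ^ 2) x =
      x * (1 - x) / (n : ℝ) +
        lam * ((2 * x - 4 * x ^ 2 + 2 * x ^ (n + 1)) / ((n : ℝ) * ((n : ℝ) - 1))
          + (x ^ (n + 1) + (1 - x) ^ (n + 1) - 1) / ((n : ℝ) ^ 2 * ((n : ℝ) - 1))
          - 2 * x * (1 - 2 * x + x ^ (n + 1) - (1 - x) ^ (n + 1)) / ((n : ℝ) * ((n : ℝ) - 1))) := by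
  have hN : (2:ℝ) ≤ (n:ℝ) := by exact_mod_cast hn
  have hN0 : (n:ℝ) ≠ 0 := by nlinarith
  have hNm1 : (n:ℝ) - 1 ≠ 0 := by nlinarith
  have hNp1 : (n:ℝ) + 1 ≠ 0 := by nlinarith
  have h2 : ((n:ℝ)^2-1) ≠ 0 := by nlinarith
  set N : ℝ := (n:ℝ) with hNdef
  set g : ℕ → ℝ := fun i => ((i:ℝ)/N - x)^2 with hg
  have hlB : lB n lam (fun t => (t - x) ^ 2) x
      = ∑ i ∈ Finset.range (n+1), g i * bez n lam x i := rfl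
  rw [hlB, step1 n hn lam x g]
  -- classical part
  have hclassic : ∑ i ∈ Finset.range (n+1), g i * bern n i x = x * (1-x) / N := by
    have hpt : ∀ i ∈ Finset.range (n+1), g i * bern n i x
        = (1/N^2) * ((i:ℝ) * ((i:ℝ)-1) * bern n i x)
          + (1/N^2 - 2*x/N) * ((i:ℝ) * bern n i x) + x^2 * bern n i x := by
      intro i _
      simp only [hg]
      field_simp
      ring
    rw [Finset.sum_congr rfl hpt, Finset.sum_add_distrib, Finset.sum_add_distrib,
      ← Finset.mul_sum, ← Finset.mul_sum, ← Finset.mul_sum,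
      sum_jj_bern n (by omega) x, sum_j_bern n x, sum_bern n x]
    field_simp
    ring
  rw [hclassic]
  -- lambda part
  set D : ℝ := N^2 * (N^2 - 1) with hD
  have hD0 : D ≠ 0 := by
    simp only [hD]; exact mul_ne_zero (pow_ne_zero 2 hN0) h2
  set A : ℝ := -4 / D with hA
  set B : ℝ := (2*N + 4*N*x) / D with hB
  set C : ℝ := -((N+1) * (1 + 2*N*x)) / D with hC
  set F : ℕ → ℝ := fun k => A * ((k:ℝ) * ((k:ℝ)-1) * bern (n+1) k x)
      + B * ((k:ℝ) * bern (n+1) k x) + C * bern (n+1) k x with hF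
  have hpt2 : ∀ j ∈ Finset.range n, (g (j+1) - g j) * ufun n x (j+1) = F (j+1) := by
    intro j _
    simp only [hg, hF, ufun, hA, hB, hC, hD, ← hNdef]
    push_cast
    field_simp
    ring
  rw [Finset.sum_congr rfl hpt2]
  have hFsum : ∑ k ∈ Finset.range (n+2), F k
      = A * ((N+1) * N * x^2) + B * ((N+1) * x) + C := by
    simp only [hF]
    rw [Finset.sum_add_distrib, Finset.sum_add_distrib,
      ← Finset.mul_sum, ← Finset.mul_sum, ← Finset.mul_sum]
    have e1 := sum_bern (n+1) x
    have e2 := sum_j_bern (n+1) x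
    have e3 := sum_jj_bern (n+1) (by omega) x
    push_cast at e1 e2 e3
    rw [show n + 2 = (n+1) + 1 from rfl, e1, e2, e3]
    ring
  have hsplit : ∑ j ∈ Finset.range n, F (j+1)
      = ∑ k ∈ Finset.range (n+2), F k - F 0 - F (n+1) := by
    rw [Finset.sum_range_succ' F (n+1), Finset.sum_range_succ (fun j => F (j+1)) n]
    ring
  rw [hsplit, hFsum]
  have hb0 : bern (n+1) 0 x = (1-x)^(n+1) := by simp [bern]
  have hbn : bern (n+1) (n+1) x = x^(n+1) := by simp [bern]
  have hF0 : F 0 = C * (1-x)^(n+1) := by simp [hF, hb0]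
  have hFn : F (n+1) = (A * ((N+1) * N) + B * (N+1) + C) * x^(n+1) := by
    simp only [hF, hbn]
    push_cast
    ring
  rw [hF0, hFn]
  simp only [hA, hB, hC, hD]
  field_simp
  ring
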